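/- For a skew-symmetric matrix A of even size 2n over a commutative ring, the square of the Pfaffian of A equals the determinant of A. -/

import Mathlib

namespace PfAux

open Matrix Equiv Finset

variable {R : Type*} [CommRing R] {n : ℕ}

def pos {n : ℕ} (i : Fin n) (r : Fin 2) : Fin (2 * n) := ⟨2 * i.val + r.val, by omega⟩

lemma pos_inj {n : ℕ} {i i' : Fin n} {r r' : Fin 2} (h : pos i r = pos i' r') : i = i' ∧ r = r' := by
  simp only [pos, Fin.mk.injEq] at h
  have h2 := r.isLt; have h4 := r'.isLt
  constructor <;> apply Fin.ext <;> omega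

lemma pos_surj {n : ℕ} (k : Fin (2 * n)) : ∃ i r, k = pos i r :=
  ⟨⟨k.val / 2, by omega⟩, ⟨k.val % 2, by omega⟩, by apply Fin.ext; simp [pos]; omega⟩

def pf (n : ℕ) (A : Matrix (Fin (2 * n)) (Fin (2 * n)) R) : R :=
  ∑ σ : Equiv.Perm (Fin (2 * n)),
    ((Equiv.Perm.sign σ : ℤ) : R) * ∏ i : Fin n, A (σ (pos i 0)) (σ (pos i 1))

/-- the bilinear form attached to `A` -/
def bil (A : Matrix (Fin (2 * n)) (Fin (2 * n)) R) (x y : Fin (2 * n) → R) : R :=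
  ∑ k, ∑ l, x k * A k l * y l

lemma bil_add_left (A : Matrix (Fin (2 * n)) (Fin (2 * n)) R) (x y z : Fin (2 * n) → R) :
    bil A (x + y) z = bil A x z + bil A y z := by
  simp [bil, add_mul, Finset.sum_add_distrib]

lemma bil_add_right (A : Matrix (Fin (2 * n)) (Fin (2 * n)) R) (x y z : Fin (2 * n) → R) :
    bil A x (y + z) = bil A x y + bil A x z := by
  simp [bil, mul_add, Finset.sum_add_distrib]

lemma bil_smul_left (A : Matrix (Fin (2 * n)) (Fin (2 * n)) R) (c : R) (x z : Fin (2 * n) → R) :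
    bil A (c • x) z = c * bil A x z := by
  simp [bil, Finset.mul_sum, mul_assoc]

lemma bil_smul_right (A : Matrix (Fin (2 * n)) (Fin (2 * n)) R) (c : R) (x z : Fin (2 * n) → R) :
    bil A x (c • z) = c * bil A x z := by
  simp only [bil, Finset.mul_sum]
  congr 1; ext k; congr 1; ext l; simp; ring

def term (A : Matrix (Fin (2 * n)) (Fin (2 * n)) R) (σ : Equiv.Perm (Fin (2 * n)))
    (v : Fin (2 * n) → Fin (2 * n) → R) : R :=
  ∏ i : Fin n, bil A (v (σ (pos i 0))) (v (σ (pos i 1)))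

lemma term_factor (A : Matrix (Fin (2 * n)) (Fin (2 * n)) R) (σ : Equiv.Perm (Fin (2 * n)))
    (v : Fin (2 * n) → Fin (2 * n) → R) (i₀ : Fin n) :
    term A σ v = bil A (v (σ (pos i₀ 0))) (v (σ (pos i₀ 1))) *
      ∏ i ∈ Finset.univ.erase i₀, bil A (v (σ (pos i 0))) (v (σ (pos i 1))) :=
  (Finset.mul_prod_erase _ _ (Finset.mem_univ i₀)).symm

lemma update_apply_ne [DecidableEq (Fin (2 * n))] (σ : Equiv.Perm (Fin (2 * n))) (v : Fin (2 * n) → Fin (2 * n) → R)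
    {i₀ i : Fin n} {r₀ r : Fin 2} (x : Fin (2 * n) → R) (h : ¬(i = i₀ ∧ r = r₀)) :
    Function.update v (σ (pos i₀ r₀)) x (σ (pos i r)) = v (σ (pos i r)) := by
  apply Function.update_of_ne
  intro hc
  exact h (pos_inj (σ.injective hc))

lemma term_update_eq [DecidableEq (Fin (2 * n))] (A : Matrix (Fin (2 * n)) (Fin (2 * n)) R) (σ : Equiv.Perm (Fin (2 * n)))
    (v : Fin (2 * n) → Fin (2 * n) → R) (i₀ : Fin n) (r₀ : Fin 2) (x : Fin (2 * n) → R) :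
    term A σ (Function.update v (σ (pos i₀ r₀)) x) =
      (if r₀ = 0 then bil A x (v (σ (pos i₀ 1))) else bil A (v (σ (pos i₀ 0))) x) *
      ∏ i ∈ Finset.univ.erase i₀, bil A (v (σ (pos i 0))) (v (σ (pos i 1))) := by
  rw [term_factor A σ _ i₀]
  congr 1
  · fin_cases r₀
    · simp only [Fin.zero_eta]
      rw [if_pos trivial, Function.update_self,
        update_apply_ne σ v x (by simp [Fin.ext_iff])]
    · simp only [Fin.mk_one]
      rw [if_neg (by simp [Fin.ext_iff]), Function.update_self,
        update_apply_ne σ v x (by simp [Fin.ext_iff])]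
  · apply Finset.prod_congr rfl
    intro i hi
    have hne : i ≠ i₀ := (Finset.mem_erase.mp hi).1
    rw [update_apply_ne σ v x (by tauto), update_apply_ne σ v x (by tauto)]


lemma term_update_add [DecidableEq (Fin (2 * n))] (A : Matrix (Fin (2 * n)) (Fin (2 * n)) R) (σ : Equiv.Perm (Fin (2 * n)))
    (v : Fin (2 * n) → Fin (2 * n) → R) (i₀ : Fin n) (r₀ : Fin 2) (x y : Fin (2 * n) → R) :
    term A σ (Function.update v (σ (pos i₀ r₀)) (x + y)) =
      term A σ (Function.update v (σ (pos i₀ r₀)) x) +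
      term A σ (Function.update v (σ (pos i₀ r₀)) y) := by
  rw [term_update_eq, term_update_eq, term_update_eq]
  split
  · rw [bil_add_left]; ring
  · rw [bil_add_right]; ring
  
lemma term_update_smul [DecidableEq (Fin (2 * n))] (A : Matrix (Fin (2 * n)) (Fin (2 * n)) R) (σ : Equiv.Perm (Fin (2 * n)))
    (v : Fin (2 * n) → Fin (2 * n) → R) (i₀ : Fin n) (r₀ : Fin 2) (c : R) (x : Fin (2 * n) → R) :
    term A σ (Function.update v (σ (pos i₀ r₀)) (c • x)) =
      c * term A σ (Function.update v (σ (pos i₀ r₀)) x) := by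
  rw [term_update_eq, term_update_eq]
  split
  · rw [bil_smul_left]; ring
  · rw [bil_smul_right]; ring

/-- `B ↦ pf (B * A * Bᵀ)` as a multilinear map in the rows of `B`. -/
def FF (A : Matrix (Fin (2 * n)) (Fin (2 * n)) R) :
    MultilinearMap R (fun _ : Fin (2 * n) => (Fin (2 * n) → R)) R where
  toFun v := ∑ σ : Equiv.Perm (Fin (2 * n)), ((Equiv.Perm.sign σ : ℤ) : R) * term A σ v
  map_update_add' v j x y := by
    rw [← Finset.sum_add_distrib]
    apply Finset.sum_congr rfl
    intro σ _
    obtain ⟨i₀, r₀, h⟩ := pos_surj (σ.symm j)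
    have hj : j = σ (pos i₀ r₀) := by rw [← h, Equiv.apply_symm_apply]
    rw [hj, term_update_add]
    ring
  map_update_smul' v j c x := by
    rw [Finset.smul_sum]
    apply Finset.sum_congr rfl
    intro σ _
    obtain ⟨i₀, r₀, h⟩ := pos_surj (σ.symm j)
    have hj : j = σ (pos i₀ r₀) := by rw [← h, Equiv.apply_symm_apply]
    rw [hj, term_update_smul, smul_eq_mul]
    ring

lemma FF_alternating (A : Matrix (Fin (2 * n)) (Fin (2 * n)) R)
    (v : Fin (2 * n) → Fin (2 * n) → R) (a b : Fin (2 * n)) (hv : v a = v b) (hab : a ≠ b) :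
    (∑ σ : Equiv.Perm (Fin (2 * n)), ((Equiv.Perm.sign σ : ℤ) : R) * term A σ v) = 0 := by
  have hvs : ∀ z, v (Equiv.swap a b z) = v z := by
    intro z
    rcases eq_or_ne z a with rfl | hza
    · rw [Equiv.swap_apply_left, hv]
    rcases eq_or_ne z b with rfl | hzb
    · rw [Equiv.swap_apply_right, hv]
    · rw [Equiv.swap_apply_of_ne_of_ne hza hzb]
  apply Finset.sum_involution (fun σ _ => Equiv.swap a b * σ)
  · intro σ _
    have hterm : term A (Equiv.swap a b * σ) v = term A σ v := by
      unfold term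
      apply Finset.prod_congr rfl
      intro i _
      rw [Equiv.Perm.mul_apply, Equiv.Perm.mul_apply, hvs, hvs]
    have hsign : ((Equiv.Perm.sign (Equiv.swap a b * σ) : ℤ) : R)
        = -((Equiv.Perm.sign σ : ℤ) : R) := by
      rw [Equiv.Perm.sign_mul, Equiv.Perm.sign_swap hab]
      push_cast
      ring
    rw [hterm, hsign]
    ring
  · intro σ _ _
    intro hc
    have := congrArg (fun τ : Equiv.Perm (Fin (2 * n)) => τ (σ.symm a)) hc
    simp only [Equiv.Perm.mul_apply, Equiv.apply_symm_apply] at this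
    rw [Equiv.swap_apply_left] at this
    exact hab this.symm
  · intro σ _; exact Finset.mem_univ _
  · intro σ _
    rw [← mul_assoc, Equiv.swap_mul_self, one_mul]

def FFA (A : Matrix (Fin (2 * n)) (Fin (2 * n)) R) :
    (Fin (2 * n) → R) [⋀^Fin (2 * n)]→ₗ[R] R :=
  { FF A with map_eq_zero_of_eq' := fun v a b hv hab => FF_alternating A v a b hv hab }

lemma FFA_apply_rows (A B : Matrix (Fin (2 * n)) (Fin (2 * n)) R) :
    FFA A (fun i => B i) = pf n (B * A * Bᵀ) := by
  unfold FFA FF pf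
  show (∑ σ : Equiv.Perm (Fin (2 * n)), ((Equiv.Perm.sign σ : ℤ) : R) * term A σ (fun i => B i))
      = _
  apply Finset.sum_congr rfl
  intro σ _
  congr 1
  unfold term
  apply Finset.prod_congr rfl
  intro i _
  rw [Matrix.mul_apply]
  unfold bil
  rw [Finset.sum_comm]
  apply Finset.sum_congr rfl
  intro l _
  rw [Matrix.mul_apply, Finset.sum_mul]
  apply Finset.sum_congr rfl
  intro k _
  rw [Matrix.transpose_apply]

lemma pf_congr (A B : Matrix (Fin (2 * n)) (Fin (2 * n)) R) :
    pf n (B * A * Bᵀ) = B.det * pf n A := by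
  classical
  have key := (FFA A).eq_smul_basis_det (Pi.basisFun R (Fin (2 * n)))
  have happ := DFunLike.congr_fun key (fun i => B i)
  rw [FFA_apply_rows] at happ
  rw [happ, AlternatingMap.smul_apply, smul_eq_mul]
  have h1 : ⇑(Pi.basisFun R (Fin (2 * n))) = fun i => (1 : Matrix (Fin (2 * n)) (Fin (2 * n)) R) i := by
    funext i j
    rw [Pi.basisFun_apply, Pi.single_apply, Matrix.one_apply]
    exact if_congr eq_comm rfl rfl
  have h2 : (Pi.basisFun R (Fin (2 * n))).det (fun i => B i) = B.det := by
    rw [Pi.basisFun_det]; rfl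
  rw [h1, FFA_apply_rows, h2, Matrix.transpose_one, Matrix.one_mul, Matrix.mul_one]
  ring


/-! ### Canonical matrices -/

def cEquiv (m : ℕ) : Fin 2 × Fin m ≃ Fin (2 * m) :=
  (Equiv.prodComm _ _).trans (finProdFinEquiv.trans (finCongr (mul_comm m 2)))

lemma cEquiv_val (m : ℕ) (r : Fin 2) (i : Fin m) :
    (cEquiv m (r, i)).val = 2 * i.val + r.val := by
  simp [cEquiv, finProdFinEquiv]
  omega

lemma pos_eq_cEquiv {m : ℕ} (i : Fin m) (r : Fin 2) : pos i r = cEquiv m (r, i) := by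
  apply Fin.ext; rw [cEquiv_val]; rfl

def JJ (x : R) : Matrix (Fin 2) (Fin 2) R := !![0, x; -x, 0]

def DD (m : ℕ) (a : Fin m → R) : Matrix (Fin (2 * m)) (Fin (2 * m)) R :=
  Matrix.reindex (cEquiv m) (cEquiv m) (Matrix.blockDiagonal fun i => JJ (a i))

lemma DD_apply' {m : ℕ} (a : Fin m → R) (x y : Fin (2 * m)) :
    DD m a x y = if ((cEquiv m).symm x).2 = ((cEquiv m).symm y).2
      then JJ (a ((cEquiv m).symm x).2) ((cEquiv m).symm x).1 ((cEquiv m).symm y).1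
      else 0 := by
  simp only [DD, Matrix.reindex_apply, Matrix.submatrix_apply]
  rw [Matrix.blockDiagonal_apply]

lemma DD_apply {m : ℕ} (a : Fin m → R) (r s : Fin 2) (i j : Fin m) :
    DD m a (cEquiv m (r, i)) (cEquiv m (s, j)) = if i = j then JJ (a i) r s else 0 := by
  rw [DD_apply']
  simp

lemma det_DD (m : ℕ) (a : Fin m → R) : (DD m a).det = ∏ i, (a i) ^ 2 := by
  unfold DD
  rw [Matrix.det_reindex_self, Matrix.det_blockDiagonal]
  apply Finset.prod_congr rfl
  intro i _
  rw [JJ, Matrix.det_fin_two_of]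
  ring

lemma fin2_cases (r : Fin 2) : r = 0 ∨ r = 1 := by revert r; decide

lemma JJ_diag (x : R) (r : Fin 2) : JJ x r r = 0 := by
  rcases fin2_cases r with rfl | rfl <;> simp [JJ]

lemma JJ_perm (x : R) (τ : Equiv.Perm (Fin 2)) :
    JJ x (τ 0) (τ 1) = ((Equiv.Perm.sign τ : ℤ) : R) * x := by
  have h : τ = 1 ∨ τ = Equiv.swap 0 1 := by revert τ; decide
  rcases h with rfl | rfl
  · simp [JJ]
  · rw [Equiv.swap_apply_left, Equiv.swap_apply_right, Equiv.Perm.sign_swap (by decide)]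
    simp [JJ]

/-- the hyperoctahedral embedding -/
def Ψ (m : ℕ) (π : Equiv.Perm (Fin m)) (g : Fin m → Equiv.Perm (Fin 2)) :
    Equiv.Perm (Fin (2 * m)) :=
  (cEquiv m).permCongr
    ((Equiv.prodCongrLeft g).trans (Equiv.prodCongr (Equiv.refl (Fin 2)) π))

lemma Ψ_apply (m : ℕ) (π : Equiv.Perm (Fin m)) (g : Fin m → Equiv.Perm (Fin 2))
    (r : Fin 2) (i : Fin m) :
    Ψ m π g (cEquiv m (r, i)) = cEquiv m (g i r, π i) := by
  simp [Ψ, Equiv.permCongr_apply, Equiv.prodCongrLeft]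

lemma sign_Ψ (m : ℕ) (π : Equiv.Perm (Fin m)) (g : Fin m → Equiv.Perm (Fin 2)) :
    Equiv.Perm.sign (Ψ m π g) = ∏ i, Equiv.Perm.sign (g i) := by
  unfold Ψ
  rw [Equiv.Perm.sign_permCongr]
  have h1 : (Equiv.prodCongrLeft g).trans (Equiv.prodCongr (Equiv.refl (Fin 2)) π)
      = (Equiv.prodCongr (Equiv.refl (Fin 2)) π) * (Equiv.prodCongrLeft g) := rfl
  have h2 : Equiv.prodCongr (Equiv.refl (Fin 2)) π
      = Equiv.prodCongrRight (fun _ : Fin 2 => π) := by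
    apply Equiv.ext; intro ⟨r, i⟩; rfl
  rw [h1, Equiv.Perm.sign_mul, h2, Equiv.Perm.sign_prodCongrRight,
    Equiv.Perm.sign_prodCongrLeft]
  simp [Finset.prod_const, Int.units_sq]

lemma Ψ_inj (m : ℕ) : Function.Injective
    (fun pg : Equiv.Perm (Fin m) × (Fin m → Equiv.Perm (Fin 2)) => Ψ m pg.1 pg.2) := by
  rintro ⟨π, g⟩ ⟨π', g'⟩ h
  simp only at h
  have key : ∀ (r : Fin 2) (i : Fin m), (g i r, π i) = (g' i r, π' i) := by
    intro r i
    apply (cEquiv m).injective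
    rw [← Ψ_apply, ← Ψ_apply, h]
  have hπ : π = π' := by
    apply Equiv.ext; intro i
    exact congrArg Prod.snd (key 0 i)
  have hg : g = g' := by
    funext i
    apply Equiv.ext; intro r
    exact congrArg Prod.fst (key r i)
  rw [Prod.ext_iff]; exact ⟨hπ, hg⟩

lemma pf_DD (m : ℕ) (a : Fin m → R) :
    pf m (DD m a) = ((2 ^ m * Nat.factorial m : ℕ) : R) * ∏ i, a i := by
  classical
  unfold pf
  set f : Equiv.Perm (Fin (2 * m)) → R := fun σ =>
    ((Equiv.Perm.sign σ : ℤ) : R) * ∏ i : Fin m, DD m a (σ (pos i 0)) (σ (pos i 1)) with hf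
  set s : Finset (Equiv.Perm (Fin (2 * m))) :=
    Finset.univ.image (fun pg : Equiv.Perm (Fin m) × (Fin m → Equiv.Perm (Fin 2)) =>
      Ψ m pg.1 pg.2) with hs
  have hvanish : ∀ σ ∈ Finset.univ, σ ∉ s → f σ = 0 := by
    intro σ _ hσ
    rcases em (∃ i, DD m a (σ (pos i 0)) (σ (pos i 1)) = 0) with ⟨i, hi⟩ | hno
    · rw [hf]
      simp only
      rw [Finset.prod_eq_zero (Finset.mem_univ i) hi, mul_zero]
    · exfalso
      push_neg at hno
      apply hσ
      set r0 : Fin m → Fin 2 := fun i => ((cEquiv m).symm (σ (pos i 0))).1 with hr0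
      set r1 : Fin m → Fin 2 := fun i => ((cEquiv m).symm (σ (pos i 1))).1 with hr1
      set q : Fin m → Fin m := fun i => ((cEquiv m).symm (σ (pos i 0))).2 with hq
      set q' : Fin m → Fin m := fun i => ((cEquiv m).symm (σ (pos i 1))).2 with hq'
      have h0 : ∀ i, σ (pos i 0) = cEquiv m (r0 i, q i) := by
        intro i
        conv_lhs => rw [← Equiv.apply_symm_apply (cEquiv m) (σ (pos i 0))]
      have h1 : ∀ i, σ (pos i 1) = cEquiv m (r1 i, q' i) := by
        intro i
        conv_lhs => rw [← Equiv.apply_symm_apply (cEquiv m) (σ (pos i 1))]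
      have hQ : ∀ i, q' i = q i ∧ r0 i ≠ r1 i := by
        intro i
        have hne := hno i
        rw [h0 i, h1 i, DD_apply] at hne
        by_cases hqq : q i = q' i
        · refine ⟨hqq.symm, ?_⟩
          rw [if_pos hqq] at hne
          intro hr
          apply hne
          rw [hr, JJ_diag]
        · rw [if_neg hqq] at hne
          exact absurd rfl hne
      have hposinj : ∀ (i j : Fin m) (r u : Fin 2), σ (pos i r) = σ (pos j u) → i = j ∧ r = u :=
        fun i j r u h => pos_inj (σ.injective h)
      have hqinj : Function.Injective q := by
        intro i j hij
        by_contra hne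
        have d1 : r0 i ≠ r1 i := (hQ i).2
        have d2 : r0 j ≠ r0 i := by
          intro hc
          apply hne
          have : σ (pos j 0) = σ (pos i 0) := by rw [h0 i, h0 j, hc, hij]
          exact (hposinj j i 0 0 this).1.symm
        have d3 : r0 j ≠ r1 i := by
          intro hc
          apply hne
          have : σ (pos j 0) = σ (pos i 1) := by rw [h1 i, h0 j, hc, ← hij, (hQ i).1]
          exact (hposinj j i 0 1 this).1.symm
        have e1 : (r0 i).val ≠ (r1 i).val := fun h => d1 (Fin.ext h)
        have e2 : (r0 j).val ≠ (r0 i).val := fun h => d2 (Fin.ext h)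
        have e3 : (r0 j).val ≠ (r1 i).val := fun h => d3 (Fin.ext h)
        have l1 := (r0 i).isLt; have l2 := (r1 i).isLt; have l3 := (r0 j).isLt
        omega
      set π : Equiv.Perm (Fin m) :=
        Equiv.ofBijective q (Finite.injective_iff_bijective.mp hqinj) with hπ
      set g : Fin m → Equiv.Perm (Fin 2) :=
        fun i => if r0 i = 0 then 1 else Equiv.swap 0 1 with hgdef
      have hg0 : ∀ i, g i 0 = r0 i := by
        intro i
        simp only [hgdef]
        rcases fin2_cases (r0 i) with h | h
        · rw [if_pos h, h]; rfl
        · rw [if_neg (by rw [h]; decide), h, Equiv.swap_apply_left]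
      have hg1 : ∀ i, g i 1 = r1 i := by
        intro i
        simp only [hgdef]
        rcases fin2_cases (r0 i) with h | h
        · have : r1 i = 1 := by
            rcases fin2_cases (r1 i) with h' | h'
            · exact absurd (h.trans h'.symm) (hQ i).2
            · exact h'
          rw [if_pos h, this]; rfl
        · have : r1 i = 0 := by
            rcases fin2_cases (r1 i) with h' | h'
            · exact h'
            · exact absurd (h.trans h'.symm) (hQ i).2
          rw [if_neg (by rw [h]; decide), this, Equiv.swap_apply_right]
      apply Finset.mem_image.mpr
      refine ⟨(π, g), Finset.mem_univ _, ?_⟩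
      apply Equiv.ext
      intro z
      obtain ⟨⟨r, i⟩, rfl⟩ := (cEquiv m).surjective z
      show Ψ m π g (cEquiv m (r, i)) = σ (cEquiv m (r, i))
      rw [Ψ_apply]
      rcases fin2_cases r with rfl | rfl
      · conv_rhs => rw [← pos_eq_cEquiv, h0 i]
        exact congrArg _ (Prod.ext (hg0 i) rfl)
      · conv_rhs => rw [← pos_eq_cEquiv, h1 i]
        exact congrArg _ (Prod.ext (hg1 i) ((hQ i).1).symm)
  rw [← Finset.sum_subset (Finset.subset_univ s) hvanish]
  rw [hs, Finset.sum_image (fun pg _ pg' _ h => Ψ_inj m h)]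
  have hterm : ∀ pg : Equiv.Perm (Fin m) × (Fin m → Equiv.Perm (Fin 2)),
      f (Ψ m pg.1 pg.2) = ∏ i, a i := by
    rintro ⟨π, g⟩
    rw [hf]
    simp only
    have hprod : ∀ i : Fin m, DD m a (Ψ m π g (pos i 0)) (Ψ m π g (pos i 1))
        = ((Equiv.Perm.sign (g i) : ℤ) : R) * a (π i) := by
      intro i
      rw [pos_eq_cEquiv, pos_eq_cEquiv, Ψ_apply, Ψ_apply, DD_apply, if_pos rfl, JJ_perm]
    have hup : ((∏ i, Equiv.Perm.sign (g i) : ℤˣ) : ℤ) = ∏ i, ((Equiv.Perm.sign (g i)) : ℤ) :=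
      map_prod (Units.coeHom ℤ) _ _
    rw [Finset.prod_congr rfl (fun i _ => hprod i), Finset.prod_mul_distrib, sign_Ψ,
      hup, Int.cast_prod, Equiv.prod_comp π a]
    have hone : ∀ i : Fin m,
        ((Equiv.Perm.sign (g i) : ℤ) : R) * ((Equiv.Perm.sign (g i) : ℤ) : R) = 1 := by
      intro i
      rw [← Int.cast_mul, ← Units.val_mul, Int.units_mul_self, Units.val_one, Int.cast_one]
    rw [← mul_assoc, ← Finset.prod_mul_distrib,
      Finset.prod_congr rfl (fun i _ => hone i), Finset.prod_const_one, one_mul]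
  rw [Finset.sum_congr rfl (fun pg _ => hterm pg), Finset.sum_const, Finset.card_univ,
    Fintype.card_prod, Fintype.card_perm, Fintype.card_fun, nsmul_eq_mul]
  have : Fintype.card (Equiv.Perm (Fin 2)) = 2 := by
    rw [Fintype.card_perm]; rfl
  rw [this, Fintype.card_fin]
  push_cast
  ring


/-! ### Glue -/

def sEquiv (m : ℕ) : (Fin 2 ⊕ Fin (2 * m)) ≃ Fin (2 * (m + 1)) :=
  finSumFinEquiv.trans (finCongr (by omega))

lemma sEquiv_inl (m : ℕ) (r : Fin 2) :
    sEquiv m (Sum.inl r) = cEquiv (m + 1) (r, 0) := by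
  apply Fin.ext
  rw [cEquiv_val]
  simp [sEquiv]

lemma sEquiv_inr (m : ℕ) (r : Fin 2) (i : Fin m) :
    sEquiv m (Sum.inr (cEquiv m (r, i))) = cEquiv (m + 1) (r, i.succ) := by
  apply Fin.ext
  rw [cEquiv_val]
  simp [sEquiv, cEquiv_val]
  omega

lemma DD_glue (m : ℕ) (a : Fin (m + 1) → R) :
    DD (m + 1) a = Matrix.reindex (sEquiv m) (sEquiv m)
      (Matrix.fromBlocks (JJ (a 0)) 0 0 (DD m (fun i => a i.succ))) := by
  ext x y
  obtain ⟨⟨r, i⟩, rfl⟩ := (cEquiv (m + 1)).surjective x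
  obtain ⟨⟨u, j⟩, rfl⟩ := (cEquiv (m + 1)).surjective y
  rw [DD_apply, Matrix.reindex_apply, Matrix.submatrix_apply]
  rcases Fin.eq_zero_or_eq_succ i with rfl | ⟨i', rfl⟩ <;>
    rcases Fin.eq_zero_or_eq_succ j with rfl | ⟨j', rfl⟩
  · rw [← sEquiv_inl m r, ← sEquiv_inl m u, Equiv.symm_apply_apply, Equiv.symm_apply_apply]
    simp [Matrix.fromBlocks]
  · rw [← sEquiv_inl m r, ← sEquiv_inr m u j', Equiv.symm_apply_apply, Equiv.symm_apply_apply]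
    simp [Matrix.fromBlocks, (Fin.succ_ne_zero j').symm]
  · rw [← sEquiv_inr m r i', ← sEquiv_inl m u, Equiv.symm_apply_apply, Equiv.symm_apply_apply]
    simp [Matrix.fromBlocks, Fin.succ_ne_zero i']
  · rw [← sEquiv_inr m r i', ← sEquiv_inr m u j', Equiv.symm_apply_apply, Equiv.symm_apply_apply]
    simp only [Matrix.fromBlocks_apply₂₂]
    rw [DD_apply]
    exact if_congr (by rw [Fin.succ_inj]) rfl rfl

/-! ### Classification over ℚ -/

lemma perm_congr_eq {N : Type*} [Fintype N] [DecidableEq N] (A : Matrix N N R)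
    (g : Equiv.Perm N) :
    ((1 : Matrix N N R).submatrix g id) * A * ((1 : Matrix N N R).submatrix g id)ᵀ
      = A.submatrix g g := by
  ext x y
  simp [Matrix.mul_apply, Matrix.submatrix_apply, Matrix.one_apply, Matrix.transpose_apply,
    ite_mul, mul_ite, Finset.sum_ite_eq, Finset.sum_ite_eq']

lemma isUnit_det_perm {N : Type*} [Fintype N] [DecidableEq N] (g : Equiv.Perm N) :
    IsUnit ((1 : Matrix N N R).submatrix g id).det := by
  have h : ((1 : Matrix N N R).submatrix g id) * ((1 : Matrix N N R).submatrix g id)ᵀ = 1 := by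
    ext x y
    simp [Matrix.mul_apply, Matrix.submatrix_apply, Matrix.one_apply, Matrix.transpose_apply,
      ite_mul, mul_ite, Finset.sum_ite_eq, Finset.sum_ite_eq', g.injective.eq_iff,
      Equiv.apply_eq_iff_eq]
  exact IsUnit.of_mul_eq_one _ (by rw [← Matrix.det_mul, h, Matrix.det_one])


lemma neg_inv_eq {N : Type*} [Fintype N] [DecidableEq N] {F : Type*} [Field F]
    (M : Matrix N N F) (h : IsUnit M.det) : (-M)⁻¹ = -M⁻¹ := by
  apply Matrix.inv_eq_right_inv
  rw [Matrix.neg_mul, Matrix.mul_neg, neg_neg, Matrix.mul_nonsing_inv _ h]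

theorem classify : ∀ (m : ℕ) (A : Matrix (Fin (2 * m)) (Fin (2 * m)) ℚ), Aᵀ = -A →
    ∃ (B : Matrix (Fin (2 * m)) (Fin (2 * m)) ℚ) (a : Fin m → ℚ),
      IsUnit B.det ∧ B * A * Bᵀ = DD m a := by
  intro m
  induction m with
  | zero =>
    intro A _
    refine ⟨1, ![], by simp, ?_⟩
    ext i j
    exact absurd i.2 (by omega)
  | succ m ih =>
    intro A hA
    have hdiagA : ∀ i, A i i = 0 := by
      intro i
      have h := congrFun (congrFun hA i) i
      simp only [Matrix.transpose_apply, Matrix.neg_apply] at h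
      linarith
    by_cases hA0 : A = 0
    · refine ⟨1, 0, by simp, ?_⟩
      subst hA0
      have hJJ : JJ (0 : ℚ) = 0 := by
        unfold JJ
        ext i j
        fin_cases i <;> fin_cases j <;> simp
      have hDD0 : DD (m + 1) (0 : Fin (m + 1) → ℚ) = 0 := by
        unfold DD
        ext x y
        simp [Matrix.reindex_apply, Matrix.blockDiagonal_apply, hJJ]
      rw [hDD0]
      simp
    · obtain ⟨i0, j0, hij⟩ : ∃ i j, A i j ≠ 0 := by
        by_contra h
        push_neg at h
        exact hA0 (Matrix.ext fun i j => h i j)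
      have hne : i0 ≠ j0 := by rintro rfl; exact hij (hdiagA i0)
      set z0 : Fin (2 * (m + 1)) := ⟨0, by omega⟩ with hz0def
      set z1 : Fin (2 * (m + 1)) := ⟨1, by omega⟩ with hz1def
      have hz : z0 ≠ z1 := by simp [hz0def, hz1def, Fin.ext_iff]
      set u := Equiv.swap z0 i0 with hu
      set k := u j0 with hk
      have hk0 : k ≠ z0 := by
        intro h
        apply hne.symm
        have : u k = u z0 := by rw [h]
        rw [hk, Equiv.swap_apply_self, Equiv.swap_apply_left] at this
        exact this
      set w := Equiv.swap z1 k with hw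
      set g := u * w with hg
      have hg0 : g z0 = i0 := by
        rw [hg, Equiv.Perm.mul_apply, hw, Equiv.swap_apply_of_ne_of_ne hz (Ne.symm hk0), hu,
          Equiv.swap_apply_left]
      have hg1 : g z1 = j0 := by
        rw [hg, Equiv.Perm.mul_apply, hw, Equiv.swap_apply_left, hk, hu, Equiv.swap_apply_self]
      set B0 : Matrix (Fin (2 * (m + 1))) (Fin (2 * (m + 1))) ℚ :=
        (1 : Matrix _ _ ℚ).submatrix g id with hB0
      set M := A.submatrix g g with hMdef
      have hM : B0 * A * B0ᵀ = M := perm_congr_eq A g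
      have hMe : ∀ x y, M y x = -M x y := by
        intro x y
        have h := congrFun (congrFun hA (g x)) (g y)
        simp only [Matrix.transpose_apply, Matrix.neg_apply] at h
        simpa [hMdef, Matrix.submatrix_apply] using h
      have hM01 : M z0 z1 ≠ 0 := by
        simpa [hMdef, Matrix.submatrix_apply, hg0, hg1] using hij
      set b := M z0 z1 with hb
      -- blocks
      set N : Matrix (Fin 2 ⊕ Fin (2 * m)) (Fin 2 ⊕ Fin (2 * m)) ℚ :=
        M.submatrix (sEquiv m) (sEquiv m) with hNdef
      have hNe : ∀ x y, N y x = -N x y := fun x y => hMe _ _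
      set N11 := N.toBlocks₁₁ with h11
      set N12 := N.toBlocks₁₂ with h12
      set N21 := N.toBlocks₂₁ with h21
      set N22 := N.toBlocks₂₂ with h22
      have hNblocks : N = Matrix.fromBlocks N11 N12 N21 N22 := (Matrix.fromBlocks_toBlocks N).symm
      have hsz0 : sEquiv m (Sum.inl (0 : Fin 2)) = z0 := by
        rw [sEquiv_inl]
        apply Fin.ext
        rw [cEquiv_val]
        simp [hz0def]
      have hsz1 : sEquiv m (Sum.inl (1 : Fin 2)) = z1 := by
        rw [sEquiv_inl]
        apply Fin.ext
        rw [cEquiv_val]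
        simp [hz1def]
        exact (Nat.mod_eq_of_lt (by omega)).symm
      have hN11 : N11 = JJ b := by
        ext r s
        have hentry : N11 r s = M (sEquiv m (Sum.inl r)) (sEquiv m (Sum.inl s)) := rfl
        fin_cases r <;> fin_cases s <;>
          rw [hentry] <;>
          simp only [Fin.zero_eta, Fin.mk_one, hsz0, hsz1] <;>
          simp [JJ]
        · have := hMe z0 z0; linarith
        · exact hb.symm
        · rw [hMe z0 z1, hb]
        · have := hMe z1 z1; linarith
      have hdet11 : IsUnit N11.det := by
        rw [hN11, JJ, Matrix.det_fin_two_of, isUnit_iff_ne_zero]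
        intro hc
        apply hM01
        have : b * b = 0 := by linarith
        rcases mul_eq_zero.mp this with h | h <;> exact h
      have hN11t : N11ᵀ = -N11 := by
        ext r s
        exact hNe (Sum.inl r) (Sum.inl s)
      have hN21t : N21 = -N12ᵀ := by
        ext x r
        show N (Sum.inr x) (Sum.inl r) = -N (Sum.inl r) (Sum.inr x)
        exact hNe _ _
      have hN22t : N22ᵀ = -N22 := by
        ext x y
        exact hNe (Sum.inr x) (Sum.inr y)
      set C : Matrix (Fin (2 * m)) (Fin 2) ℚ := -(N21 * N11⁻¹) with hC
      set A2 : Matrix (Fin (2 * m)) (Fin (2 * m)) ℚ := N22 - N21 * N11⁻¹ * N12 with hA2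
      set X : Matrix (Fin 2 ⊕ Fin (2 * m)) (Fin 2 ⊕ Fin (2 * m)) ℚ :=
        Matrix.fromBlocks 1 0 C 1 with hX
      have hCt : Cᵀ = -(N11⁻¹ * N12) := by
        rw [hC, Matrix.transpose_neg, Matrix.transpose_mul, Matrix.transpose_nonsing_inv,
          hN11t, hN21t, neg_inv_eq _ hdet11, Matrix.transpose_neg, Matrix.transpose_transpose,
          Matrix.neg_mul, Matrix.mul_neg, neg_neg]
      have hXNX : X * N * Xᵀ = Matrix.fromBlocks N11 0 0 A2 := by
        have e1 : C * N11 + N21 = 0 := by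
          rw [hC, Matrix.neg_mul, Matrix.mul_assoc, Matrix.nonsing_inv_mul _ hdet11,
            Matrix.mul_one, neg_add_cancel]
        have e2 : N11 * Cᵀ + N12 = 0 := by
          rw [hCt, Matrix.mul_neg, ← Matrix.mul_assoc, Matrix.mul_nonsing_inv _ hdet11,
            Matrix.one_mul, neg_add_cancel]
        rw [hNblocks, hX, Matrix.fromBlocks_transpose]
        simp only [Matrix.transpose_one, Matrix.transpose_zero]
        rw [Matrix.fromBlocks_multiply, Matrix.fromBlocks_multiply]
        simp only [Matrix.one_mul, Matrix.mul_one, Matrix.zero_mul, Matrix.mul_zero,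
          add_zero, zero_add]
        rw [e1, e2, Matrix.zero_mul, zero_add]
        congr 1
        rw [hC, hA2, Matrix.neg_mul, sub_eq_add_neg, add_comm N22]
      have hN12t : N12ᵀ = -N21 := by rw [hN21t, neg_neg]
      have hN21tt : N21ᵀ = -N12 := by
        rw [hN21t, Matrix.transpose_neg, Matrix.transpose_transpose]
      have hNinvt : N11⁻¹ᵀ = -N11⁻¹ := by
        rw [Matrix.transpose_nonsing_inv, hN11t, neg_inv_eq _ hdet11]
      have hA2skew : A2ᵀ = -A2 := by
        rw [hA2, Matrix.transpose_sub, hN22t, Matrix.transpose_mul, Matrix.transpose_mul,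
          hN12t, hNinvt, hN21tt]
        simp only [Matrix.neg_mul, Matrix.mul_neg, neg_neg]
        rw [← Matrix.mul_assoc]
        abel
      obtain ⟨B2, a2, hB2u, hB2⟩ := ih A2 hA2skew
      set Y : Matrix (Fin 2 ⊕ Fin (2 * m)) (Fin 2 ⊕ Fin (2 * m)) ℚ :=
        Matrix.fromBlocks 1 0 0 B2 with hY
      have hYXY : Y * (Matrix.fromBlocks N11 0 0 A2) * Yᵀ
          = Matrix.fromBlocks N11 0 0 (DD m a2) := by
        rw [hY, Matrix.fromBlocks_transpose]
        simp only [Matrix.transpose_one, Matrix.transpose_zero]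
        rw [Matrix.fromBlocks_multiply, Matrix.fromBlocks_multiply]
        simp only [Matrix.one_mul, Matrix.mul_one, Matrix.zero_mul, Matrix.mul_zero,
          add_zero, zero_add]
        rw [hB2]
      -- lift back
      have hliftN : (Matrix.reindex (sEquiv m) (sEquiv m)) N = M := by
        rw [hNdef, Matrix.reindex_apply, Matrix.submatrix_submatrix]
        rw [Equiv.self_comp_symm, Matrix.submatrix_id_id]
      set W : Matrix (Fin (2 * (m + 1))) (Fin (2 * (m + 1))) ℚ :=
        (Matrix.reindex (sEquiv m) (sEquiv m)) (Y * X) with hW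
      have hliftmul : ∀ P Q : Matrix (Fin 2 ⊕ Fin (2 * m)) (Fin 2 ⊕ Fin (2 * m)) ℚ,
          (Matrix.reindex (sEquiv m) (sEquiv m)) (P * Q)
            = (Matrix.reindex (sEquiv m) (sEquiv m)) P * (Matrix.reindex (sEquiv m) (sEquiv m)) Q := by
        intro P Q
        simp only [Matrix.reindex_apply]
        rw [Matrix.submatrix_mul_equiv P Q _ (sEquiv m).symm _]
      have hlifttr : ∀ P : Matrix (Fin 2 ⊕ Fin (2 * m)) (Fin 2 ⊕ Fin (2 * m)) ℚ,
          (Matrix.reindex (sEquiv m) (sEquiv m)) Pᵀ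
            = ((Matrix.reindex (sEquiv m) (sEquiv m)) P)ᵀ := by
        intro P
        simp only [Matrix.reindex_apply, Matrix.transpose_submatrix]
      have hWMW : W * M * Wᵀ = DD (m + 1) (Fin.cons b a2) := by
        rw [hW, ← hliftN, ← hlifttr, ← hliftmul, ← hliftmul]
        have hmain : Y * X * N * (Y * X)ᵀ = Matrix.fromBlocks N11 0 0 (DD m a2) := by
          rw [Matrix.transpose_mul]
          have : Y * X * N * (Xᵀ * Yᵀ) = Y * (X * N * Xᵀ) * Yᵀ := by
            simp only [Matrix.mul_assoc]
          rw [this, hXNX, hYXY]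
        rw [hmain, DD_glue m (Fin.cons b a2)]
        have htail : (fun i : Fin m => (Fin.cons b a2 : Fin (m + 1) → ℚ) i.succ) = a2 := by
          funext i
          simp
        rw [htail, Fin.cons_zero, hN11]
      refine ⟨W * B0, Fin.cons b a2, ?_, ?_⟩
      · rw [Matrix.det_mul]
        apply IsUnit.mul ?_ (isUnit_det_perm g)
        rw [hW, Matrix.det_reindex_self, Matrix.det_mul, hY, hX,
          Matrix.det_fromBlocks_zero₂₁, Matrix.det_fromBlocks_zero₁₂]
        simp only [Matrix.det_one, one_mul, mul_one]
        exact hB2u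
      · calc (W * B0) * A * (W * B0)ᵀ = W * (B0 * A * B0ᵀ) * Wᵀ := by
              rw [Matrix.transpose_mul]
              simp only [Matrix.mul_assoc]
          _ = DD (m + 1) (Fin.cons b a2) := by rw [hM, hWMW]


/-! ### Key identity over ℚ -/

theorem key_rat (m : ℕ) (A : Matrix (Fin (2 * m)) (Fin (2 * m)) ℚ) (hA : Aᵀ = -A) :
    pf m A ^ 2 = ((2 ^ m * Nat.factorial m : ℕ) : ℚ) ^ 2 * A.det := by
  obtain ⟨B, a, hBu, hBA⟩ := classify m A hA
  have h1 : pf m (B * A * Bᵀ) = B.det * pf m A := pf_congr A B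
  have h2 : (B * A * Bᵀ).det = B.det ^ 2 * A.det := by
    rw [Matrix.det_mul, Matrix.det_mul, Matrix.det_transpose]
    ring
  rw [hBA, pf_DD] at h1
  rw [hBA, det_DD] at h2
  have hd : B.det ≠ 0 := by
    intro h
    rw [h] at hBu
    exact absurd hBu (by simp)
  have hmain : (B.det) ^ 2 * (pf m A ^ 2)
      = (B.det) ^ 2 * (((2 ^ m * Nat.factorial m : ℕ) : ℚ) ^ 2 * A.det) := by
    calc (B.det) ^ 2 * (pf m A ^ 2) = (B.det * pf m A) ^ 2 := by ring
    _ = (((2 ^ m * Nat.factorial m : ℕ) : ℚ) * ∏ i, a i) ^ 2 := by rw [h1]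
    _ = ((2 ^ m * Nat.factorial m : ℕ) : ℚ) ^ 2 * ∏ i, (a i) ^ 2 := by
        rw [Finset.prod_pow]; ring
    _ = ((2 ^ m * Nat.factorial m : ℕ) : ℚ) ^ 2 * (B.det ^ 2 * A.det) := by rw [h2]
    _ = (B.det) ^ 2 * (((2 ^ m * Nat.factorial m : ℕ) : ℚ) ^ 2 * A.det) := by ring
  exact mul_left_cancel₀ (pow_ne_zero 2 hd) hmain

/-! ### Transfer to arbitrary commutative rings -/

lemma pf_map {S : Type*} [CommRing S] (f : R →+* S) (n : ℕ)
    (A : Matrix (Fin (2 * n)) (Fin (2 * n)) R) :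
    pf n (A.map f) = f (pf n A) := by
  unfold pf
  rw [map_sum]
  apply Finset.sum_congr rfl
  intro σ _
  rw [_root_.map_mul, map_intCast, map_prod]
  simp [Matrix.map_apply]

def gvar (n : ℕ) : Type := {p : Fin (2 * n) × Fin (2 * n) // p.1 < p.2}

noncomputable def genA (n : ℕ) : Matrix (Fin (2 * n)) (Fin (2 * n)) (MvPolynomial (gvar n) ℤ) :=
  Matrix.of fun i j =>
    if h : i < j then MvPolynomial.X ⟨(i, j), h⟩
    else if h' : j < i then - MvPolynomial.X ⟨(j, i), h'⟩
    else 0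

lemma genA_skew (n : ℕ) : (genA n)ᵀ = -(genA n) := by
  apply Matrix.ext
  intro i j
  simp only [Matrix.transpose_apply, Matrix.neg_apply, genA, Matrix.of_apply]
  rcases lt_trichotomy i j with h | h | h
  · rw [dif_neg (not_lt.mpr h.le), dif_pos h, dif_pos h]
  · subst h
    rw [dif_neg (lt_irrefl i), dif_neg (lt_irrefl i), neg_zero]
  · rw [dif_pos h, dif_neg (not_lt.mpr h.le), dif_pos h, neg_neg]

lemma genA_map_skew {S : Type*} [CommRing S] (n : ℕ) (f : MvPolynomial (gvar n) ℤ →+* S) :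
    ((genA n).map f)ᵀ = -((genA n).map f) := by
  ext i j
  have h := congrFun (congrFun (genA_skew n) i) j
  simp only [Matrix.transpose_apply, Matrix.neg_apply] at h ⊢
  simp only [Matrix.map_apply, h, map_neg]

theorem key_ring (n : ℕ) (A : Matrix (Fin (2 * n)) (Fin (2 * n)) R)
    (hskew : Aᵀ = -A) (hdiag : ∀ i, A i i = 0) :
    pf n A ^ 2 = ((2 ^ n * Nat.factorial n : ℕ) : R) ^ 2 * A.det := by
  classical
  have hgen : pf n (genA n) ^ 2
      = ((2 ^ n * Nat.factorial n : ℕ) : MvPolynomial (gvar n) ℤ) ^ 2 * (genA n).det := by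
    have hinj : Function.Injective
        (MvPolynomial.map (Int.castRingHom ℚ) : MvPolynomial (gvar n) ℤ → MvPolynomial (gvar n) ℚ) :=
      MvPolynomial.map_injective _ Int.cast_injective
    apply hinj
    apply MvPolynomial.funext
    intro x
    set ψ : MvPolynomial (gvar n) ℤ →+* ℚ :=
      (MvPolynomial.eval x).comp (MvPolynomial.map (Int.castRingHom ℚ)) with hψ
    have heval : ∀ P : MvPolynomial (gvar n) ℤ,
        MvPolynomial.eval x (MvPolynomial.map (Int.castRingHom ℚ) P) = ψ P := fun P => rfl
    rw [heval, heval, _root_.map_mul, map_pow, map_pow, map_natCast, ← pf_map ψ n (genA n),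
      RingHom.map_det, RingHom.mapMatrix_apply]
    exact key_rat n ((genA n).map ψ) (genA_map_skew n ψ)
  set ρ : MvPolynomial (gvar n) ℤ →+* R :=
    (MvPolynomial.eval₂Hom (Int.castRingHom R) (fun v : gvar n => A v.1.1 v.1.2)) with hρ
  have hmap : (genA n).map ρ = A := by
    ext i j
    simp only [Matrix.map_apply, genA, Matrix.of_apply]
    rcases lt_trichotomy i j with h | h | h
    · rw [dif_pos h]
      simp [hρ, MvPolynomial.eval₂Hom_X']
      exact MvPolynomial.eval₂_X _ _ _
    · subst h
      rw [dif_neg (lt_irrefl i), dif_neg (lt_irrefl i)]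
      rw [map_zero, hdiag]
    · rw [dif_neg (not_lt.mpr h.le), dif_pos h, map_neg]
      have hji := congrFun (congrFun hskew j) i
      simp only [Matrix.transpose_apply, Matrix.neg_apply] at hji
      have hX : ρ (MvPolynomial.X ⟨(j, i), h⟩) = A j i := MvPolynomial.eval₂_X _ _ _
      rw [hX, hji]
  have := congrArg ρ hgen
  rw [_root_.map_mul, map_pow, map_pow, map_natCast, ← pf_map ρ n (genA n), RingHom.map_det,
    RingHom.mapMatrix_apply, hmap] at this
  exact this

end PfAux

open Finset in
/-- For a skew-symmetric `2n × 2n` matrix `A` over a commutative ring `R`, the Pfaffian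
`p` of `A` — characterized by `(2^n * n!) * p = ∑_{σ} sgn σ ∏_{i<n} A_{σ(2i), σ(2i+1)}`,
with `2^n * n!` a unit in `R` — satisfies `p ^ 2 = det A`. -/
theorem pfaffian_sq_eq_det {R : Type*} [CommRing R] (n : ℕ)
    (A : Matrix (Fin (2 * n)) (Fin (2 * n)) R)
    (hskew : A.transpose = -A)
    (hunit : IsUnit ((2 ^ n * Nat.factorial n : ℕ) : R))
    (p : R)
    (hp : ((2 ^ n * Nat.factorial n : ℕ) : R) * p =
      ∑ σ : Equiv.Perm (Fin (2 * n)),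
        ((Equiv.Perm.sign σ : ℤ) : R) *
          ∏ i : Fin n,
            A (σ ⟨2 * i.val, by omega⟩) (σ ⟨2 * i.val + 1, by omega⟩)) :
    p ^ 2 = A.det := by
  have hsum : (∑ σ : Equiv.Perm (Fin (2 * n)),
      ((Equiv.Perm.sign σ : ℤ) : R) *
        ∏ i : Fin n,
          A (σ ⟨2 * i.val, by omega⟩) (σ ⟨2 * i.val + 1, by omega⟩)) = PfAux.pf n A := by
    unfold PfAux.pf
    apply Finset.sum_congr rfl
    intro σ _
    congr 1
  have hdiag : ∀ i, A i i = 0 := by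
    intro i
    have hn : 0 < n := by
      rcases Nat.eq_zero_or_pos n with rfl | h
      · exact absurd i.2 (by omega)
      · exact h
    obtain ⟨k, rfl⟩ : ∃ k, n = k + 1 := ⟨n - 1, by omega⟩
    have hcast : ((2 ^ (k + 1) * Nat.factorial (k + 1) : ℕ) : R)
        = 2 * ((2 ^ k * Nat.factorial (k + 1) : ℕ) : R) := by
      push_cast
      ring
    rw [hcast] at hunit
    have h2 : IsUnit (2 : R) := isUnit_of_mul_isUnit_left hunit
    have hAi := congrFun (congrFun hskew i) i
    simp only [Matrix.transpose_apply, Matrix.neg_apply] at hAi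
    have : (2 : R) * A i i = 0 := by linear_combination hAi
    exact (h2.mul_right_eq_zero).mp this
  have hkey := PfAux.key_ring n A hskew hdiag
  have hcp : ((2 ^ n * Nat.factorial n : ℕ) : R) * p = PfAux.pf n A := hp.trans hsum
  have h2 : ((2 ^ n * Nat.factorial n : ℕ) : R) ^ 2 * p ^ 2
      = ((2 ^ n * Nat.factorial n : ℕ) : R) ^ 2 * A.det := by
    calc ((2 ^ n * Nat.factorial n : ℕ) : R) ^ 2 * p ^ 2
        = (((2 ^ n * Nat.factorial n : ℕ) : R) * p) ^ 2 := by ring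
      _ = PfAux.pf n A ^ 2 := by rw [hcp]
      _ = ((2 ^ n * Nat.factorial n : ℕ) : R) ^ 2 * A.det := hkey
  exact (hunit.pow 2).mul_left_cancel h2
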